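/- For an integer n ≥ 3, the girth of the unitary Cayley graph G_{ℤ/nℤ} is 3 if n is odd, 6 if n = 6, and 4 if n is even and n ≠ 6. -/

import Mathlib

/-- The unitary Cayley graph of a commutative ring: `a` is adjacent to `b`
iff `a ≠ b` and `a - b` is a unit. -/
def unitaryCayley (X : Type*) [CommRing X] : SimpleGraph X where
  Adj a b := a ≠ b ∧ IsUnit (a - b)
  symm := by
    constructor
    rintro a b ⟨h1, h2⟩
    exact ⟨h1.symm, neg_sub a b ▸ h2.neg⟩
  loopless := by constructor; rintro a ⟨h, _⟩; exact h rfl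

open SimpleGraph

namespace UCAux

lemma girth_eq {V : Type*} {G : SimpleGraph V} {k : ℕ}
    (h1 : ∃ (a : V) (w : G.Walk a a), w.IsCycle ∧ w.length = k)
    (h2 : ∀ (a : V) (w : G.Walk a a), w.IsCycle → k ≤ w.length) :
    G.girth = k := by
  obtain ⟨a, w, hc, hl⟩ := h1
  have hle : G.egirth ≤ (k : ℕ∞) := by
    rw [← hl]
    exact iInf_le_of_le a (iInf_le_of_le w (iInf_le_of_le hc le_rfl))
  have hge : (k : ℕ∞) ≤ G.egirth := by
    rw [SimpleGraph.le_egirth]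
    intro a w hw
    exact_mod_cast h2 a w hw
  unfold SimpleGraph.girth
  rw [le_antisymm hle hge]
  simp

lemma adj_cast {n : ℕ} [NeZero n] {i j : ℕ} (hij : j < i) (hi : i < n)
    (hco : Nat.Coprime (i - j) n) :
    (unitaryCayley (ZMod n)).Adj (i : ZMod n) (j : ZMod n) := by
  constructor
  · intro h
    rw [ZMod.natCast_eq_natCast_iff', Nat.mod_eq_of_lt hi,
      Nat.mod_eq_of_lt (lt_trans hij hi)] at h
    omega
  · rw [← Nat.cast_sub hij.le]
    exact (ZMod.isUnit_iff_coprime _ _).mpr hco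

lemma cast_ne_cast {n : ℕ} {i j : ℕ} (hi : i < n) (hj : j < n) (hij : i ≠ j) :
    (i : ZMod n) ≠ (j : ZMod n) := by
  intro h
  rw [ZMod.natCast_eq_natCast_iff', Nat.mod_eq_of_lt hi, Nat.mod_eq_of_lt hj] at h
  exact hij h

lemma isUnit_zmod_iff {n : ℕ} [NeZero n] (x : ZMod n) :
    IsUnit x ↔ Nat.Coprime x.val n := by
  conv_lhs => rw [← ZMod.natCast_zmod_val x]
  exact ZMod.isUnit_iff_coprime _ _

/-- Any closed walk in the unitary Cayley graph of `ZMod n` with `n` even has even length. -/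
lemma parity_aux {n : ℕ} [NeZero n] (hn : 2 ∣ n) :
    ∀ {u v : ZMod n} (w : (unitaryCayley (ZMod n)).Walk u v),
      ZMod.castHom hn (ZMod 2) v = ZMod.castHom hn (ZMod 2) u + w.length := by
  intro u v w
  induction w with
  | nil => simp
  | @cons u x v h p ih =>
    have hne : ZMod.castHom hn (ZMod 2) u - ZMod.castHom hn (ZMod 2) x ≠ 0 := by
      have : IsUnit (ZMod.castHom hn (ZMod 2) u - ZMod.castHom hn (ZMod 2) x) := by
        rw [← map_sub]; exact h.2.map _
      exact this.ne_zero
    have step : ∀ s t : ZMod 2, s - t ≠ 0 → t = s + 1 := by decide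
    have hx : ZMod.castHom hn (ZMod 2) x = ZMod.castHom hn (ZMod 2) u + 1 :=
      step _ _ hne
    rw [ih, hx, SimpleGraph.Walk.length_cons]
    push_cast
    ring

lemma even_length {n : ℕ} [NeZero n] (hn : 2 ∣ n) {a : ZMod n}
    (w : (unitaryCayley (ZMod n)).Walk a a) : Even w.length := by
  have := parity_aux hn w
  have h0 : ((w.length : ℕ) : ZMod 2) = 0 := by
    have := left_eq_add.mp this
    exact this
  rw [ZMod.natCast_eq_zero_iff] at h0
  exact even_iff_two_dvd.mpr h0

lemma triangle {V : Type*} {G : SimpleGraph V} {a b c : V}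
    (hab : G.Adj a b) (hbc : G.Adj b c) (hca : G.Adj c a) :
    ∃ w : G.Walk a a, w.IsCycle ∧ w.length = 3 := by
  refine ⟨.cons hab (.cons hbc (.cons hca .nil)), ?_, rfl⟩
  have h1 := hab.ne
  have h2 := hbc.ne
  have h3 := hca.ne
  simp [SimpleGraph.Walk.isCycle_def, SimpleGraph.Walk.isTrail_def, h2,
    h1, h3, Ne.symm h1, Ne.symm h2, Ne.symm h3]

lemma square {V : Type*} {G : SimpleGraph V} {a b c d : V}
    (hab : G.Adj a b) (hbc : G.Adj b c) (hcd : G.Adj c d) (hda : G.Adj d a)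
    (hac : a ≠ c) (hbd : b ≠ d) :
    ∃ w : G.Walk a a, w.IsCycle ∧ w.length = 4 := by
  refine ⟨.cons hab (.cons hbc (.cons hcd (.cons hda .nil))), ?_, rfl⟩
  have h1 := hab.ne
  have h2 := hbc.ne
  have h3 := hcd.ne
  have h4 := hda.ne
  simp [SimpleGraph.Walk.isCycle_def, SimpleGraph.Walk.isTrail_def, h1, h2, h3, h4,
    Ne.symm h1, Ne.symm h2, Ne.symm h3, Ne.symm h4, hac, hbd, Ne.symm hac, Ne.symm hbd]

lemma hexagon {V : Type*} {G : SimpleGraph V} {a b c d e f : V}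
    (h1 : G.Adj a b) (h2 : G.Adj b c) (h3 : G.Adj c d) (h4 : G.Adj d e)
    (h5 : G.Adj e f) (h6 : G.Adj f a)
    (hab : a ≠ b) (hac : a ≠ c) (had : a ≠ d) (hae : a ≠ e) (haf : a ≠ f)
    (hbc : b ≠ c) (hbd : b ≠ d) (hbe : b ≠ e) (hbf : b ≠ f)
    (hcd : c ≠ d) (hce : c ≠ e) (hcf : c ≠ f) (hde : d ≠ e) (hdf : d ≠ f) (hef : e ≠ f) :
    ∃ w : G.Walk a a, w.IsCycle ∧ w.length = 6 := by
  refine ⟨.cons h1 (.cons h2 (.cons h3 (.cons h4 (.cons h5 (.cons h6 .nil))))), ?_, rfl⟩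
  simp [SimpleGraph.Walk.isCycle_def, SimpleGraph.Walk.isTrail_def,
    hab, hac, had, hae, haf, hbc, hbd, hbe, hbf, hcd, hce, hcf, hde, hdf, hef,
    Ne.symm hab, Ne.symm hac, Ne.symm had, Ne.symm hae, Ne.symm haf, Ne.symm hbc,
    Ne.symm hbd, Ne.symm hbe, Ne.symm hbf, Ne.symm hcd, Ne.symm hce, Ne.symm hcf,
    Ne.symm hde, Ne.symm hdf, Ne.symm hef]

/-- Destructure a 4-cycle. -/
lemma cycle4 {V : Type*} {G : SimpleGraph V} {a : V} (w : G.Walk a a)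
    (hc : w.IsCycle) (hl : w.length = 4) :
    ∃ b c d, G.Adj a b ∧ G.Adj b c ∧ G.Adj c d ∧ G.Adj d a ∧ a ≠ c ∧ b ≠ d := by
  obtain ⟨ht, _, hnd⟩ := (SimpleGraph.Walk.isCycle_def w).mp hc
  clear ht hc
  cases w with
  | nil => simp at hl
  | cons h1 p =>
    cases p with
    | nil => simp at hl
    | cons h2 q =>
      cases q with
      | nil => simp at hl
      | cons h3 r =>
        cases r with
        | nil => simp at hl
        | cons h4 s =>
          cases s with
          | cons h5 t => simp [SimpleGraph.Walk.length_cons] at hl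
          | nil =>
            refine ⟨_, _, _, h1, h2, h3, h4, ?_, ?_⟩ <;>
            · simp only [SimpleGraph.Walk.support_cons, SimpleGraph.Walk.support_nil,
                List.tail_cons, List.nodup_cons, List.mem_cons, List.not_mem_nil] at hnd
              tauto

lemma zmod6_unit_iff (x : ZMod 6) : IsUnit x ↔ (x = 1 ∨ x = 5) := by
  rw [isUnit_zmod_iff]
  revert x; decide

lemma no_square_zmod6 : ∀ (a : ZMod 6) (w : (unitaryCayley (ZMod 6)).Walk a a),
    w.IsCycle → w.length ≠ 4 := by
  intro a w hc hl
  obtain ⟨b, c, d, h1, h2, h3, h4, hac, hbd⟩ := cycle4 w hc hl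
  have k1 := (zmod6_unit_iff _).mp h1.2
  have k2 := (zmod6_unit_iff _).mp h2.2
  have k3 := (zmod6_unit_iff _).mp h3.2
  have k4 := (zmod6_unit_iff _).mp h4.2
  have key : ∀ a b c d : ZMod 6, (a - b = 1 ∨ a - b = 5) → (b - c = 1 ∨ b - c = 5) →
      (c - d = 1 ∨ c - d = 5) → (d - a = 1 ∨ d - a = 5) → a ≠ c → b ≠ d → False := by decide
  exact key a b c d k1 k2 k3 k4 hac hbd

lemma exists_k (n : ℕ) (h2 : 2 ∣ n) (h8 : 8 ≤ n) :
    ∃ k : ℕ, 1 < k ∧ k + 1 < n ∧ Nat.Coprime k n := by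
  by_cases h4 : 4 ∣ n
  · obtain ⟨m, rfl⟩ := h4
    refine ⟨2 * m - 1, by omega, by omega, ?_⟩
    have hm : 2 ≤ m := by omega
    set d := Nat.gcd (2 * m - 1) (4 * m) with hd
    have hdk : d ∣ 2 * m - 1 := Nat.gcd_dvd_left _ _
    have hdn : d ∣ 4 * m := Nat.gcd_dvd_right _ _
    have hd2 : d ∣ 2 := by
      have : d ∣ 2 * (2 * m - 1) := hdk.mul_left 2
      have h' : 4 * m - 2 * (2 * m - 1) = 2 := by omega
      have := Nat.dvd_sub hdn this
      rwa [h'] at this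
    have hdpos : 0 < d := Nat.gcd_pos_of_pos_right _ (by omega)
    have hdle : d ≤ 2 := Nat.le_of_dvd (by norm_num) hd2
    interval_cases d
    · exact hd.symm
    · obtain ⟨c, hc⟩ := hdk; omega
  · obtain ⟨m, rfl⟩ := h2
    have hmodd : ¬ 2 ∣ m := by intro ⟨c, hc⟩; exact h4 ⟨c, by omega⟩
    have hm : 5 ≤ m := by omega
    refine ⟨m - 2, by omega, by omega, ?_⟩
    set d := Nat.gcd (m - 2) (2 * m) with hd
    have hdk : d ∣ m - 2 := Nat.gcd_dvd_left _ _
    have hdn : d ∣ 2 * m := Nat.gcd_dvd_right _ _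
    have hd4 : d ∣ 4 := by
      have : d ∣ 2 * (m - 2) := hdk.mul_left 2
      have h' : 2 * m - 2 * (m - 2) = 4 := by omega
      have := Nat.dvd_sub hdn this
      rwa [h'] at this
    have hdpos : 0 < d := Nat.gcd_pos_of_pos_right _ (by omega)
    have hdle : d ≤ 4 := Nat.le_of_dvd (by norm_num) hd4
    interval_cases d
    · exact hd.symm
    · obtain ⟨c, hc⟩ := hdk; omega
    · obtain ⟨c, hc⟩ := hd4; omega
    · obtain ⟨c, hc⟩ := hdk; omega

end UCAux

theorem unitaryCayley_girth (n : ℕ) (hn : 3 ≤ n) :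
    (unitaryCayley (ZMod n)).girth =
      if Odd n then 3 else if n = 6 then 6 else 4 := by
  have : NeZero n := ⟨by omega⟩
  by_cases hodd : Odd n
  · rw [if_pos hodd]
    refine UCAux.girth_eq ?_ ?_
    · have hab : (unitaryCayley (ZMod n)).Adj ((0 : ℕ) : ZMod n) ((1 : ℕ) : ZMod n) :=
        (UCAux.adj_cast (by omega) (by omega) (by simpa using Nat.coprime_one_left n)).symm
      have hbc : (unitaryCayley (ZMod n)).Adj ((1 : ℕ) : ZMod n) ((2 : ℕ) : ZMod n) :=
        (UCAux.adj_cast (by omega) (by omega) (by simpa using Nat.coprime_one_left n)).symm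
      have hca : (unitaryCayley (ZMod n)).Adj ((2 : ℕ) : ZMod n) ((0 : ℕ) : ZMod n) :=
        UCAux.adj_cast (by omega) (by omega)
          (by simpa using Nat.coprime_two_left.mpr hodd)
      obtain ⟨w, hw, hl⟩ := UCAux.triangle hab hbc hca
      exact ⟨_, w, hw, hl⟩
    · intro a w hw
      exact hw.three_le_length
  · rw [if_neg hodd]
    have h2 : 2 ∣ n := by
      rcases Nat.even_or_odd n with h | h
      · exact h.two_dvd
      · exact absurd h hodd
    by_cases h6 : n = 6
    · subst h6
      rw [if_pos rfl]
      refine UCAux.girth_eq ?_ ?_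
      · have adj : ∀ i j : ℕ, j < i → i < 6 → Nat.Coprime (i - j) 6 →
            (unitaryCayley (ZMod 6)).Adj (i : ZMod 6) (j : ZMod 6) :=
          fun i j h1 h2 h3 => UCAux.adj_cast h1 h2 h3
        have h1 : (unitaryCayley (ZMod 6)).Adj ((0:ℕ) : ZMod 6) ((1:ℕ) : ZMod 6) :=
          (adj 1 0 (by omega) (by omega) (by decide)).symm
        have h2 : (unitaryCayley (ZMod 6)).Adj ((1:ℕ) : ZMod 6) ((2:ℕ) : ZMod 6) :=
          (adj 2 1 (by omega) (by omega) (by decide)).symm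
        have h3 : (unitaryCayley (ZMod 6)).Adj ((2:ℕ) : ZMod 6) ((3:ℕ) : ZMod 6) :=
          (adj 3 2 (by omega) (by omega) (by decide)).symm
        have h4 : (unitaryCayley (ZMod 6)).Adj ((3:ℕ) : ZMod 6) ((4:ℕ) : ZMod 6) :=
          (adj 4 3 (by omega) (by omega) (by decide)).symm
        have h5 : (unitaryCayley (ZMod 6)).Adj ((4:ℕ) : ZMod 6) ((5:ℕ) : ZMod 6) :=
          (adj 5 4 (by omega) (by omega) (by decide)).symm
        have h6 : (unitaryCayley (ZMod 6)).Adj ((5:ℕ) : ZMod 6) ((0:ℕ) : ZMod 6) :=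
          adj 5 0 (by omega) (by omega) (by decide)
        obtain ⟨w, hw, hl⟩ := UCAux.hexagon h1 h2 h3 h4 h5 h6
          (UCAux.cast_ne_cast (by omega) (by omega) (by omega))
          (UCAux.cast_ne_cast (by omega) (by omega) (by omega))
          (UCAux.cast_ne_cast (by omega) (by omega) (by omega))
          (UCAux.cast_ne_cast (by omega) (by omega) (by omega))
          (UCAux.cast_ne_cast (by omega) (by omega) (by omega))
          (UCAux.cast_ne_cast (by omega) (by omega) (by omega))
          (UCAux.cast_ne_cast (by omega) (by omega) (by omega))
          (UCAux.cast_ne_cast (by omega) (by omega) (by omega))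
          (UCAux.cast_ne_cast (by omega) (by omega) (by omega))
          (UCAux.cast_ne_cast (by omega) (by omega) (by omega))
          (UCAux.cast_ne_cast (by omega) (by omega) (by omega))
          (UCAux.cast_ne_cast (by omega) (by omega) (by omega))
          (UCAux.cast_ne_cast (by omega) (by omega) (by omega))
          (UCAux.cast_ne_cast (by omega) (by omega) (by omega))
          (UCAux.cast_ne_cast (by omega) (by omega) (by omega))
        exact ⟨_, w, hw, hl⟩
      · intro a w hw
        have h3 := hw.three_le_length
        have heven := UCAux.even_length (by norm_num) w
        have h4 := UCAux.no_square_zmod6 a w hw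
        obtain ⟨r, hr⟩ := heven
        omega
    · rw [if_neg h6]
      refine UCAux.girth_eq ?_ ?_
      · by_cases h3n : 3 ∣ n
        · -- then 6 ∣ n, n ≠ 6, so n ≥ 12 ≥ 8
          have h8 : 8 ≤ n := by
            obtain ⟨a, rfl⟩ := h2
            obtain ⟨b, hb⟩ := h3n
            omega
          obtain ⟨k, hk1, hk2, hkc⟩ := UCAux.exists_k n h2 h8
          have hu : IsUnit ((k : ℕ) : ZMod n) := (ZMod.isUnit_iff_coprime _ _).mpr hkc
          have hab : (unitaryCayley (ZMod n)).Adj ((0 : ℕ) : ZMod n) ((1 : ℕ) : ZMod n) :=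
            (UCAux.adj_cast (by omega) (by omega) (by simpa using Nat.coprime_one_left n)).symm
          have hbc : (unitaryCayley (ZMod n)).Adj ((1 : ℕ) : ZMod n) ((k + 1 : ℕ) : ZMod n) :=
            (UCAux.adj_cast (by omega) (by omega) (by simpa using hkc)).symm
          have hcd : (unitaryCayley (ZMod n)).Adj ((k + 1 : ℕ) : ZMod n) ((k : ℕ) : ZMod n) :=
            UCAux.adj_cast (by omega) (by omega) (by simpa using Nat.coprime_one_left n)
          have hda : (unitaryCayley (ZMod n)).Adj ((k : ℕ) : ZMod n) ((0 : ℕ) : ZMod n) :=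
            UCAux.adj_cast (by omega) (by omega) (by simpa using hkc)
          obtain ⟨w, hw, hl⟩ := UCAux.square hab hbc hcd hda
            (UCAux.cast_ne_cast (by omega) (by omega) (by omega))
            (UCAux.cast_ne_cast (by omega) (by omega) (by omega))
          exact ⟨_, w, hw, hl⟩
        · -- 3 ∤ n, use 0,1,2,3
          have h4n : 4 ≤ n := by omega
          have hco3 : Nat.Coprime 3 n := (Nat.Prime.coprime_iff_not_dvd Nat.prime_three).mpr h3n
          have hab : (unitaryCayley (ZMod n)).Adj ((0 : ℕ) : ZMod n) ((1 : ℕ) : ZMod n) :=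
            (UCAux.adj_cast (by omega) (by omega) (by simpa using Nat.coprime_one_left n)).symm
          have hbc : (unitaryCayley (ZMod n)).Adj ((1 : ℕ) : ZMod n) ((2 : ℕ) : ZMod n) :=
            (UCAux.adj_cast (by omega) (by omega) (by simpa using Nat.coprime_one_left n)).symm
          have hcd : (unitaryCayley (ZMod n)).Adj ((2 : ℕ) : ZMod n) ((3 : ℕ) : ZMod n) :=
            (UCAux.adj_cast (by omega) (by omega) (by simpa using Nat.coprime_one_left n)).symm
          have hda : (unitaryCayley (ZMod n)).Adj ((3 : ℕ) : ZMod n) ((0 : ℕ) : ZMod n) :=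
            UCAux.adj_cast (by omega) (by omega) (by simpa using hco3)
          obtain ⟨w, hw, hl⟩ := UCAux.square hab hbc hcd hda
            (UCAux.cast_ne_cast (by omega) (by omega) (by omega))
            (UCAux.cast_ne_cast (by omega) (by omega) (by omega))
          exact ⟨_, w, hw, hl⟩
      · intro a w hw
        have h3 := hw.three_le_length
        have heven := UCAux.even_length h2 w
        obtain ⟨r, hr⟩ := heven
        omega
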